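/- arXiv:2509.06267 — 2 statements merged into one kernel-verified Lean document; each statement's English description precedes it below -/
import Mathlib

section
/- Let M be a contract containing a critical plan (a',t'), i.e. V(r₀;M) = u_A(a',r₀) − t' for some r₀ ∈ R, such that some ρ* ∈ R(a';M) satisfies ρ* ≻_AI r(a'). Then the game induced by M has a Nash equilibrium (β, ρ) in which every (a,t) in the support of β satisfies a ≤ a'. -/
open MeasureTheory Set Filter Topology

section Aux

/-- gradient inequality for concave differentiable functions -/
lemma grad_ineq {lo hi : ℝ} {f f' : ℝ → ℝ} (hf : ConcaveOn ℝ (Icc lo hi) f)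
    (hder : ∀ x ∈ Icc lo hi, HasDerivAt f (f' x) x)
    {x y : ℝ} (hx : x ∈ Icc lo hi) (hy : y ∈ Icc lo hi) :
    f y ≤ f x + f' x * (y - x) := by
  rcases lt_trichotomy x y with h | h | h
  · have := hf.slope_le_of_hasDerivAt hx hy h (hder x hx)
    rw [slope_def_field, div_le_iff₀ (by linarith)] at this
    linarith
  · simp [h]
  · have := hf.le_slope_of_hasDerivAt hy hx h (hder x hx)
    rw [slope_def_field, le_div_iff₀ (by linarith)] at this
    nlinarith

/-- 1-D Kakutani-style fixed point via sup argument. -/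
lemma fixpt (c σ d' : ℝ) (hcσ : c ≤ σ) (K : ℝ → Set ℝ)
    (hne : ∀ r ∈ Icc c σ, (K r).Nonempty)
    (hsub : ∀ r ∈ Icc c σ, K r ⊆ Icc c d')
    (hclosed : ∀ (u v : ℕ → ℝ) (r y : ℝ), (∀ n, u n ∈ Icc c σ) → (∀ n, v n ∈ K (u n)) →
      Tendsto u atTop (nhds r) → Tendsto v atTop (nhds y) → r ∈ Icc c σ → y ∈ K r)
    (htop : ∃ y ∈ K σ, y ≤ σ) :
    ∃ s ∈ Icc c σ, ∃ y1 ∈ K s, ∃ y2 ∈ K s, y1 ≤ s ∧ s ≤ y2 := by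
  classical
  set S : Set ℝ := {r | r ∈ Icc c σ ∧ ∃ y ∈ K r, r ≤ y} with hS
  have hcS : c ∈ S := by
    obtain ⟨y, hy⟩ := hne c (by simp [hcσ])
    exact ⟨by simp [hcσ], y, hy, (hsub c (by simp [hcσ]) hy).1⟩
  have hSne : S.Nonempty := ⟨c, hcS⟩
  have hSbdd : BddAbove S := ⟨σ, fun r hr => hr.1.2⟩
  set s := sSup S with hs
  have hsmem : s ∈ Icc c σ := ⟨le_csSup hSbdd hcS, csSup_le hSne fun r hr => hr.1.2⟩
  obtain ⟨u, humono, hulim, huS⟩ := exists_seq_tendsto_sSup hSne hSbdd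
  have hv : ∀ n, ∃ y ∈ K (u n), u n ≤ y := fun n => (huS n).2
  choose v hvK hvle using hv
  have hvIcc : ∀ n, v n ∈ Icc c d' := fun n => hsub _ (huS n).1 (hvK n)
  obtain ⟨y2, hy2Icc, φ, hφ, hy2lim⟩ := (isCompact_Icc (a := c) (b := d')).tendsto_subseq hvIcc
  have huφ : Tendsto (u ∘ φ) atTop (nhds s) := hulim.comp hφ.tendsto_atTop
  have hy2K : y2 ∈ K s :=
    hclosed (u ∘ φ) (v ∘ φ) s y2 (fun n => (huS (φ n)).1) (fun n => hvK (φ n)) huφ hy2lim hsmem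
  have hsy2 : s ≤ y2 := le_of_tendsto_of_tendsto' huφ hy2lim (fun n => hvle (φ n))
  rcases eq_or_lt_of_le hsmem.2 with heq | hlt
  · obtain ⟨y1, hy1K, hy1le⟩ := htop
    exact ⟨s, hsmem, y1, heq ▸ hy1K, y2, hy2K, heq ▸ hy1le, hsy2⟩
  · set w : ℕ → ℝ := fun n => s + (σ - s) * (1/2)^(n+1) with hw
    have hσs : (0:ℝ) < σ - s := by linarith
    have hwgt : ∀ n, s < w n := fun n => by
      have h3 : (0:ℝ) < (σ - s) * (1/2)^(n+1) := by positivity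
      simp only [hw]; linarith
    have hwle : ∀ n, w n ≤ σ := fun n => by
      have h1 : ((1:ℝ)/2)^(n+1) ≤ 1 := pow_le_one₀ (by norm_num) (by norm_num)
      have : (σ - s) * (1/2)^(n+1) ≤ (σ - s) * 1 :=
        mul_le_mul_of_nonneg_left h1 (by linarith)
      simp only [hw]; linarith
    have hwIcc : ∀ n, w n ∈ Icc c σ := fun n => ⟨hsmem.1.trans (hwgt n).le, hwle n⟩
    have hwlim : Tendsto w atTop (nhds s) := by
      have h0 : Tendsto (fun n : ℕ => (σ - s) * (1/2)^(n+1)) atTop (nhds 0) := by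
        have := tendsto_pow_atTop_nhds_zero_of_lt_one (r := (1:ℝ)/2) (by norm_num) (by norm_num)
        have := (this.const_mul (σ - s)).comp (tendsto_add_atTop_nat 1)
        simpa [Function.comp_def] using this
      have h0' : Tendsto (fun n : ℕ => s + (σ - s) * (1/2)^(n+1)) atTop (nhds (s + 0)) :=
        tendsto_const_nhds.add h0
      rw [add_zero] at h0'
      exact h0'
    have hwnot : ∀ n, w n ∉ S := fun n hn => absurd (le_csSup hSbdd hn) (not_le.2 (hwgt n))
    have hz : ∀ n, ∃ y, y ∈ K (w n) := fun n => hne _ (hwIcc n)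
    choose z hzK using hz
    have hzlt : ∀ n, z n < w n := fun n => by
      by_contra h
      exact hwnot n ⟨hwIcc n, z n, hzK n, not_lt.1 h⟩
    have hzIcc : ∀ n, z n ∈ Icc c d' := fun n => hsub _ (hwIcc n) (hzK n)
    obtain ⟨y1, hy1Icc, ψ, hψ, hy1lim⟩ := (isCompact_Icc (a := c) (b := d')).tendsto_subseq hzIcc
    have hwψ : Tendsto (w ∘ ψ) atTop (nhds s) := hwlim.comp hψ.tendsto_atTop
    have hy1K : y1 ∈ K s :=
      hclosed (w ∘ ψ) (z ∘ ψ) s y1 (fun n => hwIcc (ψ n)) (fun n => hzK (ψ n)) hwψ hy1lim hsmem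
    have hy1le : y1 ≤ s :=
      le_of_tendsto_of_tendsto' hy1lim hwψ (fun n => (hzlt (ψ n)).le)
    exact ⟨s, hsmem, y1, hy1K, y2, hy2K, hy1le, hsy2⟩

lemma pderiv2 {F : ℝ×ℝ → ℝ} (hF : ContDiff ℝ 2 F) (a r : ℝ) :
    HasDerivAt (fun y => F (a, y)) (fderiv ℝ F (a,r) (0,1)) r := by
  have hfd := ((hF.differentiable (by norm_num)) (a,r)).hasFDerivAt
  have hcurve : HasDerivAt (fun y : ℝ => ((a, y) : ℝ×ℝ)) ((0:ℝ),(1:ℝ)) r :=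
    HasDerivAt.prodMk (hasDerivAt_const r a) (hasDerivAt_id r)
  exact hfd.comp_hasDerivAt r hcurve

lemma pderiv1_cont {F : ℝ×ℝ → ℝ} (hF : ContDiff ℝ 2 F) {d : ℝ → ℝ → ℝ}
    (hd : ∀ a r, HasDerivAt (fun x => F (x, r)) (d a r) a) (a : ℝ) :
    Continuous (fun r => d a r) := by
  have key : ∀ r, d a r = fderiv ℝ F (a,r) (1,0) := by
    intro r
    have hfd := ((hF.differentiable (by norm_num)) (a,r)).hasFDerivAt
    have hcurve : HasDerivAt (fun x : ℝ => ((x, r) : ℝ×ℝ)) ((1:ℝ),(0:ℝ)) a :=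
      HasDerivAt.prodMk (hasDerivAt_id a) (hasDerivAt_const a r)
    exact (hd a r).unique (hfd.comp_hasDerivAt a hcurve)
  have hc : Continuous (fderiv ℝ F) := hF.continuous_fderiv (by norm_num)
  have : Continuous (fun r : ℝ => fderiv ℝ F (a,r) ((1:ℝ),(0:ℝ))) :=
    (ContinuousLinearMap.apply ℝ ℝ ((1:ℝ),(0:ℝ))).continuous.comp
      (hc.comp (Continuous.prodMk_right a))
  simpa [← key] using this

lemma seq_lt (x z : ℝ) (h : x < z) :
    ∃ w : ℕ → ℝ, (∀ n, x ≤ w n ∧ w n < z) ∧ Tendsto w atTop (nhds z) := by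
  have hzx : (0:ℝ) < z - x := by linarith
  refine ⟨fun n => z - (z - x) * (1/2)^(n+1), fun n => ⟨?_, ?_⟩, ?_⟩
  · have h1 : ((1:ℝ)/2)^(n+1) ≤ 1 := pow_le_one₀ (by norm_num) (by norm_num)
    nlinarith
  · have h3 : (0:ℝ) < (z - x) * (1/2)^(n+1) := by positivity
    linarith
  · have h0 : Tendsto (fun n : ℕ => (z - x) * (1/2)^(n+1)) atTop (nhds 0) := by
      have h4 := tendsto_pow_atTop_nhds_zero_of_lt_one
        (r := (1:ℝ)/2) (by norm_num) (by norm_num)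
      have h5 := (h4.const_mul (z - x)).comp (tendsto_add_atTop_nat 1)
      simpa [Function.comp_def] using h5
    simpa using tendsto_const_nhds.sub h0

lemma seq_gt (z x : ℝ) (h : z < x) :
    ∃ w : ℕ → ℝ, (∀ n, z < w n ∧ w n ≤ x) ∧ Tendsto w atTop (nhds z) := by
  obtain ⟨w, hw, hwl⟩ := seq_lt (-x) (-z) (by linarith)
  refine ⟨fun n => -(w n), fun n => ⟨?_, ?_⟩, ?_⟩
  · show z < -(w n); linarith [(hw n).2]
  · show -(w n) ≤ x; linarith [(hw n).1]
  simpa using hwl.neg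

end Aux

/-- The agent's value of optimally choosing a plan from contract `M` given outsider action `r`:
`V(r;M) = max_{(a,t) ∈ M} (u_A(a,r) - t)`. -/
noncomputable def Vfun (uA : ℝ → ℝ → ℝ) (M : Set (ℝ × ℝ)) (r : ℝ) : ℝ :=
  sSup ((fun p : ℝ × ℝ => uA p.1 r - p.2) '' M)

/-- The dual transfer `T(a;M) = max_{r ∈ R} (u_A(a,r) - V(r;M))`. -/
noncomputable def Tfun (uA : ℝ → ℝ → ℝ) (R : Set ℝ) (M : Set (ℝ × ℝ)) (a : ℝ) : ℝ :=
  sSup ((fun r => uA a r - Vfun uA M r) '' R)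

/-- The set of dual replies `R(a;M)`: maximizers of `r ↦ u_A(a,r) - V(r;M)` over `R`. -/
def dualReplies (uA : ℝ → ℝ → ℝ) (R : Set ℝ) (M : Set (ℝ × ℝ)) (a : ℝ) : Set ℝ :=
  {r | r ∈ R ∧ uA a r - Vfun uA M r = Tfun uA R M a}

/-- A contract is a nonempty compact subset of `A × ℝ` where `A = [a₀, ā]`. -/
def IsContract (a0 abar : ℝ) (M : Set (ℝ × ℝ)) : Prop :=
  M.Nonempty ∧ IsCompact M ∧ M ⊆ (Set.Icc a0 abar) ×ˢ (Set.univ : Set ℝ)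

/-- `r₁ ≽_AI r₂`: `r₁` weakly dominates `r₂` in the order of agent incentives, where
`d1 a r` denotes the partial derivative `∂₁u_A(a,r)`. -/
def succeqAI (d1 : ℝ → ℝ → ℝ) (A : Set ℝ) (r1 r2 : ℝ) : Prop :=
  ∀ a ∈ A, d1 a r2 ≤ d1 a r1

/-- `r₁ ≻_AI r₂`: strict dominance in the order of agent incentives. -/
def succAI (d1 : ℝ → ℝ → ℝ) (A : Set ℝ) (r1 r2 : ℝ) : Prop :=
  succeqAI d1 A r1 r2 ∧ ¬ succeqAI d1 A r2 r1

/-- Assumption 1 (ranked incentives): `≽_AI` is complete on `R`, and strict dominance gives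
strictly higher agent incentives everywhere. -/
def RankedIncentives (d1 : ℝ → ℝ → ℝ) (A R : Set ℝ) : Prop :=
  (∀ r1 ∈ R, ∀ r2 ∈ R, succeqAI d1 A r1 r2 ∨ succeqAI d1 A r2 r1) ∧
  (∀ r1 ∈ R, ∀ r2 ∈ R, succAI d1 A r1 r2 → ∀ a ∈ A, d1 a r2 < d1 a r1)

/-- Assumption 2 (intuitive mixture): for all `r₁, r₂ ∈ R` and every `r` between them,
either `r ≽_AI r₁` or `r ≽_AI r₂`. -/
def IntuitiveMixture (d1 : ℝ → ℝ → ℝ) (A R : Set ℝ) : Prop :=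
  ∀ r1 ∈ R, ∀ r2 ∈ R, ∀ r, min r1 r2 ≤ r → r ≤ max r1 r2 →
    succeqAI d1 A r r1 ∨ succeqAI d1 A r r2

/-- The (topological) support of a measure: points all of whose open neighborhoods have
positive measure. -/
def mSupp {X : Type*} [TopologicalSpace X] [MeasurableSpace X]
    (μ : Measure X) : Set X :=
  {x | ∀ U : Set X, IsOpen U → x ∈ U → 0 < μ U}

/-- A (mixed-strategy) Nash equilibrium of the game induced by contract `M`: a pair of Borel
probability measures, `β` on `M` and `ρ` on `R`, such that every plan in the support of `β`
maximizes the agent's expected payoff over `M` and every action in the support of `ρ`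
maximizes the outsider's expected payoff over `R`. -/
def IsNash (uA uO : ℝ → ℝ → ℝ) (R : Set ℝ) (M : Set (ℝ × ℝ))
    (β : Measure (ℝ × ℝ)) (ρ : Measure ℝ) : Prop :=
  IsProbabilityMeasure β ∧ IsProbabilityMeasure ρ ∧
  mSupp β ⊆ M ∧ mSupp ρ ⊆ R ∧
  (∀ p ∈ mSupp β, ∀ q ∈ M, (∫ r, uA q.1 r ∂ρ) - q.2 ≤ (∫ r, uA p.1 r ∂ρ) - p.2) ∧
  (∀ r ∈ mSupp ρ, ∀ r' ∈ R, (∫ p : ℝ × ℝ, uO p.1 r' ∂β) ≤ (∫ p : ℝ × ℝ, uO p.1 r ∂β))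


lemma mSupp_mix {X : Type*} [TopologicalSpace X] [T1Space X] [MeasurableSpace X]
    [OpensMeasurableSpace X] (p1 p2 : X) (c1 c2 : ENNReal) :
    mSupp (c1 • Measure.dirac p1 + c2 • Measure.dirac p2) ⊆ {p1, p2} := by
  intro x hx
  by_contra hxn
  have hU : IsOpen ({p1, p2} : Set X)ᶜ :=
    (((Set.finite_singleton p2).insert p1).isClosed).isOpen_compl
  have hx1 : p1 ∉ ({p1, p2} : Set X)ᶜ := fun h => h (by simp)
  have hx2 : p2 ∉ ({p1, p2} : Set X)ᶜ := fun h => h (by simp)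
  have := hx _ hU (by simpa using hxn)
  rw [Measure.add_apply, Measure.smul_apply, Measure.smul_apply,
    Measure.dirac_apply' _ hU.measurableSet, Measure.dirac_apply' _ hU.measurableSet,
    Set.indicator_of_notMem hx1, Set.indicator_of_notMem hx2] at this
  simp at this

lemma mSupp_dirac {X : Type*} [TopologicalSpace X] [T1Space X] [MeasurableSpace X]
    [OpensMeasurableSpace X] (p : X) : mSupp (Measure.dirac p) ⊆ {p} := by
  intro x hx
  by_contra hxn
  have hU : IsOpen ({p} : Set X)ᶜ := isClosed_singleton.isOpen_compl
  have := hx _ hU (by simpa using hxn)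
  rw [Measure.dirac_apply' _ hU.measurableSet, Set.indicator_of_notMem (by simp)] at this
  simp at this

lemma integrable_dirac' {X : Type*} [MeasurableSpace X] [MeasurableSingletonClass X]
    {f : X → ℝ} (hf : Measurable f) (p : X) : Integrable f (Measure.dirac p) := by
  refine ⟨hf.aestronglyMeasurable, ?_⟩
  rw [HasFiniteIntegral]
  rw [lintegral_dirac]
  exact ENNReal.coe_lt_top

lemma integral_mix {X : Type*} [MeasurableSpace X] [MeasurableSingletonClass X]
    {f : X → ℝ} (hf : Measurable f) (p1 p2 : X) {c1 c2 : ℝ} (h1 : 0 ≤ c1) (h2 : 0 ≤ c2) :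
    ∫ x, f x ∂(ENNReal.ofReal c1 • Measure.dirac p1 + ENNReal.ofReal c2 • Measure.dirac p2)
      = c1 * f p1 + c2 * f p2 := by
  rw [integral_add_measure ((integrable_dirac' hf p1).smul_measure ENNReal.ofReal_ne_top)
      ((integrable_dirac' hf p2).smul_measure ENNReal.ofReal_ne_top),
    integral_smul_measure, integral_smul_measure, integral_dirac, integral_dirac,
    ENNReal.toReal_ofReal h1, ENNReal.toReal_ofReal h2, smul_eq_mul, smul_eq_mul]

lemma build (uA uO : ℝ → ℝ → ℝ) (rlo rhi : ℝ)
    (hmeas : ∀ r, Measurable fun p : ℝ × ℝ => uO p.1 r)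
    (M : Set (ℝ × ℝ)) (a' : ℝ)
    (rs : ℝ) (hrs : rs ∈ Icc rlo rhi) (p1 p2 : ℝ × ℝ) (hp1M : p1 ∈ M) (hp2M : p2 ∈ M)
    (hopt1 : ∀ q ∈ M, uA q.1 rs - q.2 ≤ uA p1.1 rs - p1.2)
    (hopt2 : ∀ q ∈ M, uA q.1 rs - q.2 ≤ uA p2.1 rs - p2.2)
    (ha1 : p1.1 ≤ a') (ha2 : p2.1 ≤ a')
    (lam : ℝ) (h0 : 0 ≤ lam) (h1 : lam ≤ 1)
    (hopt : ∀ r' ∈ Icc rlo rhi,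
      lam * uO p2.1 r' + (1-lam) * uO p1.1 r' ≤ lam * uO p2.1 rs + (1-lam) * uO p1.1 rs) :
    ∃ β ρ, IsNash uA uO (Icc rlo rhi) M β ρ ∧ ∀ p ∈ mSupp β, p.1 ≤ a' := by
  classical
  set β : Measure (ℝ × ℝ) :=
    ENNReal.ofReal (1-lam) • Measure.dirac p1 + ENNReal.ofReal lam • Measure.dirac p2 with hβ
  set ρ : Measure ℝ := Measure.dirac rs with hρ
  have hsuppβ : mSupp β ⊆ {p1, p2} := mSupp_mix p1 p2 _ _
  have hsuppρ : mSupp ρ ⊆ {rs} := mSupp_dirac rs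
  have hβint : ∀ r', ∫ p : ℝ × ℝ, uO p.1 r' ∂β
      = (1-lam) * uO p1.1 r' + lam * uO p2.1 r' :=
    fun r' => integral_mix (hmeas r') p1 p2 (by linarith) h0
  have hρint : ∀ b : ℝ, ∫ r, uA b r ∂ρ = uA b rs := fun b => integral_dirac _ rs
  refine ⟨β, ρ, ⟨?_, ?_, hsuppβ.trans ?_, hsuppρ.trans ?_, ?_, ?_⟩, ?_⟩
  · constructor
    rw [hβ, Measure.add_apply, Measure.smul_apply, Measure.smul_apply,
      measure_univ, measure_univ, smul_eq_mul, smul_eq_mul, mul_one, mul_one,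
      ← ENNReal.ofReal_add (by linarith) h0]
    norm_num
  · exact ⟨by simp [hρ]⟩
  · rintro x (rfl | rfl)
    exacts [hp1M, by simpa using hp2M]
  · rintro x rfl
    exact hrs
  · intro p hp q hq
    rw [hρint, hρint]
    rcases hsuppβ hp with rfl | rfl
    exacts [hopt1 q hq, hopt2 q hq]
  · intro r hr r' hr'
    have hr : r = rs := hsuppρ hr
    subst hr
    rw [hβint, hβint]
    have := hopt r' hr'
    linarith
  · intro p hp
    rcases hsuppβ hp with rfl | rfl
    exacts [ha1, ha2]

/-- If a contract `M` contains a critical plan `(a',t')` at which some dual reply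
`ρ*` satisfies `ρ* ≻_AI r(a')`, then the game induced by `M` has a Nash equilibrium in which
every on-path action is at most `a'`. -/
theorem stmt12 (a0 abar rlo rhi : ℝ) (hA : a0 < abar) (hR : rlo < rhi)
    (uA uO : ℝ → ℝ → ℝ)
    (huA : ContDiff ℝ 2 fun p : ℝ × ℝ => uA p.1 p.2)
    (huO : ContDiff ℝ 2 fun p : ℝ × ℝ => uO p.1 p.2)
    (hconc : ∀ a ∈ Set.Icc a0 abar, StrictConcaveOn ℝ (Set.Icc rlo rhi) (fun r => uO a r))
    (d1 : ℝ → ℝ → ℝ)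
    (hd1 : ∀ a r : ℝ, HasDerivAt (fun x => uA x r) (d1 a r) a)
    (hRI : RankedIncentives d1 (Set.Icc a0 abar) (Set.Icc rlo rhi))
    (hIM : IntuitiveMixture d1 (Set.Icc a0 abar) (Set.Icc rlo rhi))
    (rBR : ℝ → ℝ)
    (hrBR : ∀ a ∈ Set.Icc a0 abar, rBR a ∈ Set.Icc rlo rhi ∧
      ∀ r' ∈ Set.Icc rlo rhi, r' ≠ rBR a → uO a r' < uO a (rBR a))
    (M : Set (ℝ × ℝ)) (hM : IsContract a0 abar M)
    (a' t' : ℝ) (hat : (a', t') ∈ M)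
    (r0 : ℝ) (hr0 : r0 ∈ Set.Icc rlo rhi)
    (hcrit : Vfun uA M r0 = uA a' r0 - t')
    (ρstar : ℝ) (hρstar : ρstar ∈ dualReplies uA (Set.Icc rlo rhi) M a')
    (hdom : succAI d1 (Set.Icc a0 abar) ρstar (rBR a')) :
    ∃ β ρ, IsNash uA uO (Set.Icc rlo rhi) M β ρ ∧ ∀ p ∈ mSupp β, p.1 ≤ a' := by
  classical
  obtain ⟨hMne, hMcpt, hMsub⟩ := hM
  obtain ⟨hρR, hρT⟩ := hρstar
  have ha0A : a0 ∈ Icc a0 abar := ⟨le_refl _, hA.le⟩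
  have ha'A : a' ∈ Icc a0 abar := (hMsub hat).1
  have cA : Continuous fun p : ℝ × ℝ => uA p.1 p.2 := huA.continuous
  have cO : Continuous fun p : ℝ × ℝ => uO p.1 p.2 := huO.continuous
  have cΦ : ∀ r : ℝ, Continuous fun p : ℝ × ℝ => uA p.1 r - p.2 := fun r =>
    (cA.comp (continuous_fst.prodMk continuous_const)).sub continuous_snd
  -- best-reply sets of the agent
  set B : ℝ → Set (ℝ × ℝ) :=
    fun r => {p | p ∈ M ∧ ∀ q ∈ M, uA q.1 r - q.2 ≤ uA p.1 r - p.2} with hB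
  have hBne : ∀ r : ℝ, ∃ p, p ∈ B r := by
    intro r
    obtain ⟨p, hpM, hp⟩ := hMcpt.exists_isMaxOn hMne (cΦ r).continuousOn
    exact ⟨p, hpM, fun q hq => hp hq⟩
  -- value function facts
  have hbdd : ∀ r : ℝ, BddAbove ((fun p : ℝ × ℝ => uA p.1 r - p.2) '' M) := fun r =>
    hMcpt.bddAbove_image (cΦ r).continuousOn
  have hVle : ∀ r : ℝ, ∀ q ∈ M, uA q.1 r - q.2 ≤ Vfun uA M r := fun r q hq =>
    le_csSup (hbdd r) ⟨q, hq, rfl⟩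
  -- the critical plan is a best reply at ρstar
  have hTbdd : BddAbove ((fun r => uA a' r - Vfun uA M r) '' (Icc rlo rhi)) := by
    refine ⟨t', ?_⟩
    rintro v ⟨r, hrR, rfl⟩
    have := hVle r (a', t') hat
    simp only at this ⊢
    linarith
  have hTget' : t' ≤ Tfun uA (Icc rlo rhi) M a' :=
    le_csSup hTbdd ⟨r0, hr0, by show uA a' r0 - Vfun uA M r0 = t'; rw [hcrit]; ring⟩
  have hVρle : Vfun uA M ρstar ≤ uA a' ρstar - t' := by
    rw [Tfun] at hTget'
    rw [Tfun] at hρT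
    linarith [hρT, hTget']
  have hatB : (a', t') ∈ B ρstar := by
    refine ⟨hat, fun q hq => ?_⟩
    have := hVle ρstar q hq
    show uA q.1 ρstar - q.2 ≤ uA a' ρstar - t'
    linarith
  -- the order ≽AI is represented by φ := d1 a0 ·
  have hφcont : Continuous (fun r => d1 a0 r) := pderiv1_cont huA hd1 a0
  have hgeq : ∀ r1 ∈ Icc rlo rhi, ∀ r2 ∈ Icc rlo rhi,
      d1 a0 r2 ≤ d1 a0 r1 → succeqAI d1 (Icc a0 abar) r1 r2 := by
    intro r1 h1 r2 h2 hle
    by_cases h : succeqAI d1 (Icc a0 abar) r1 r2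
    · exact h
    rcases hRI.1 r1 h1 r2 h2 with h' | h'
    · exact absurd h' h
    · exact absurd hle (not_le.2 (hRI.2 r2 h2 r1 h1 ⟨h', h⟩ a0 ha0A))
  have hltd : ∀ r1 ∈ Icc rlo rhi, ∀ r2 ∈ Icc rlo rhi,
      d1 a0 r1 < d1 a0 r2 → ∀ a ∈ Icc a0 abar, d1 a r1 < d1 a r2 := by
    intro r1 h1 r2 h2 hlt
    refine hRI.2 r2 h2 r1 h1 ⟨hgeq r2 h2 r1 h1 hlt.le, fun hcon => ?_⟩
    exact absurd (hcon a0 ha0A) (not_le.2 hlt)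
  have heqd : ∀ r1 ∈ Icc rlo rhi, ∀ r2 ∈ Icc rlo rhi,
      d1 a0 r1 = d1 a0 r2 → ∀ a ∈ Icc a0 abar, d1 a r1 = d1 a r2 := by
    intro r1 h1 r2 h2 heq a ha
    exact le_antisymm (hgeq r2 h2 r1 h1 heq.le a ha) (hgeq r1 h1 r2 h2 heq.ge a ha)
  have hrbR : rBR a' ∈ Icc rlo rhi := (hrBR a' ha'A).1
  have hφrb : d1 a0 (rBR a') < d1 a0 ρstar := hRI.2 ρstar hρR (rBR a') hrbR hdom a0 ha0A
  -- monotone comparative statics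
  have hmcs : ∀ r ∈ Icc rlo rhi, d1 a0 r < d1 a0 ρstar → ∀ p ∈ B r, p.1 ≤ a' := by
    intro r hrR hφr p hp
    by_contra hgt
    push_neg at hgt
    set g : ℝ → ℝ := fun x => uA x ρstar - uA x r with hg
    have hder : ∀ x : ℝ, HasDerivAt g (d1 x ρstar - d1 x r) x := fun x =>
      (hd1 x ρstar).sub (hd1 x r)
    obtain ⟨c, hc, hceq⟩ := exists_hasDerivAt_eq_slope g (fun x => d1 x ρstar - d1 x r) hgt
      (fun x _ => (hder x).continuousAt.continuousWithinAt) (fun x _ => hder x)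
    have hcA : c ∈ Icc a0 abar := ⟨ha'A.1.trans hc.1.le, hc.2.le.trans (hMsub hp.1).1.2⟩
    have hpos : 0 < d1 c ρstar - d1 c r := sub_pos.2 (hltd r hrR ρstar hρR hφr c hcA)
    rw [eq_div_iff (by linarith : p.1 - a' ≠ 0)] at hceq
    have e1 : uA a' r - t' ≤ uA p.1 r - p.2 := hp.2 (a', t') hat
    have e2 : uA p.1 ρstar - p.2 ≤ uA a' ρstar - t' := hatB.2 p hp.1
    have hgle : g p.1 ≤ g a' := by simp only [hg]; linarith
    nlinarith [mul_pos hpos (sub_pos.2 hgt)]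
  -- equal φ gives the same best replies; the critical plan stays optimal
  have heqB : ∀ r ∈ Icc rlo rhi, d1 a0 r = d1 a0 ρstar → (a', t') ∈ B r := by
    intro r hrR hφr
    have hd0 : ∀ a ∈ Icc a0 abar, d1 a r = d1 a ρstar := heqd r hrR ρstar hρR hφr
    refine ⟨hat, fun q hq => ?_⟩
    set g : ℝ → ℝ := fun x => uA x r - uA x ρstar with hg
    have hder : ∀ x : ℝ, HasDerivAt g (d1 x r - d1 x ρstar) x := fun x =>
      (hd1 x r).sub (hd1 x ρstar)
    have hqA : q.1 ∈ Icc a0 abar := (hMsub hq).1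
    have hgq : g q.1 = g a' := by
      rcases lt_trichotomy q.1 a' with h | h | h
      · obtain ⟨c, hc, hceq⟩ := exists_hasDerivAt_eq_slope g (fun x => d1 x r - d1 x ρstar) h
          (fun x _ => (hder x).continuousAt.continuousWithinAt) (fun x _ => hder x)
        have hcA : c ∈ Icc a0 abar := ⟨hqA.1.trans hc.1.le, hc.2.le.trans ha'A.2⟩
        rw [hd0 c hcA, sub_self] at hceq
        rcases div_eq_zero_iff.1 hceq.symm with h' | h'
        · linarith
        · linarith
      · rw [h]
      · obtain ⟨c, hc, hceq⟩ := exists_hasDerivAt_eq_slope g (fun x => d1 x r - d1 x ρstar) h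
          (fun x _ => (hder x).continuousAt.continuousWithinAt) (fun x _ => hder x)
        have hcA : c ∈ Icc a0 abar := ⟨ha'A.1.trans hc.1.le, hc.2.le.trans hqA.2⟩
        rw [hd0 c hcA, sub_self] at hceq
        rcases div_eq_zero_iff.1 hceq.symm with h' | h'
        · linarith
        · linarith
    have e2 : uA q.1 ρstar - q.2 ≤ uA a' ρstar - t' := hatB.2 q hq
    show uA q.1 r - q.2 ≤ uA a' r - t'
    simp only [hg] at hgq
    linarith
  -- quasiconcavity of φ from intuitive mixture
  have hqc : ∀ r1 ∈ Icc rlo rhi, ∀ r2 ∈ Icc rlo rhi, ∀ r, min r1 r2 ≤ r → r ≤ max r1 r2 →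
      min (d1 a0 r1) (d1 a0 r2) ≤ d1 a0 r := by
    intro r1 h1 r2 h2 r hmin hmax
    rcases hIM r1 h1 r2 h2 r hmin hmax with h | h
    · exact (min_le_left _ _).trans (h a0 ha0A)
    · exact (min_le_right _ _).trans (h a0 ha0A)
  -- the candidate best-response correspondence
  set K : ℝ → Set ℝ := fun r => {y | ∃ p, p ∈ B r ∧ p.1 ≤ a' ∧ y = rBR p.1} with hK
  have hKsub : ∀ r : ℝ, K r ⊆ Icc rlo rhi := by
    rintro r y ⟨p, hp, _, rfl⟩
    exact (hrBR p.1 (hMsub hp.1).1).1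
  have hKclosed : ∀ (u v : ℕ → ℝ) (r y : ℝ), (∀ n, u n ∈ Icc rlo rhi) →
      (∀ n, v n ∈ K (u n)) → Tendsto u atTop (nhds r) → Tendsto v atTop (nhds y) →
      r ∈ Icc rlo rhi → y ∈ K r := by
    intro u v r y hu hv hulim hvlim hrR
    have hvm : ∀ n, ∃ p, p ∈ B (u n) ∧ p.1 ≤ a' ∧ v n = rBR p.1 := hv
    choose p hpB hpa hpv using hvm
    obtain ⟨pb, hpbM, ψ, hψ, hplim⟩ := hMcpt.tendsto_subseq (fun n => (hpB n).1)
    have huψ : Tendsto (u ∘ ψ) atTop (nhds r) := hulim.comp hψ.tendsto_atTop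
    have hvψ : Tendsto (v ∘ ψ) atTop (nhds y) := hvlim.comp hψ.tendsto_atTop
    have h1 : Tendsto (fun n => (p (ψ n)).1) atTop (nhds pb.1) :=
      (continuous_fst.tendsto pb).comp hplim
    have h2 : Tendsto (fun n => (p (ψ n)).2) atTop (nhds pb.2) :=
      (continuous_snd.tendsto pb).comp hplim
    have hpbB : pb ∈ B r := by
      refine ⟨hpbM, fun q hq => ?_⟩
      have hL : Tendsto (fun n => uA q.1 (u (ψ n)) - q.2) atTop (nhds (uA q.1 r - q.2)) := by
        have : Tendsto (fun n => ((q.1 : ℝ), u (ψ n))) atTop (nhds (q.1, r)) :=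
          tendsto_const_nhds.prodMk_nhds huψ
        exact ((cA.tendsto _).comp this).sub tendsto_const_nhds
      have hRt : Tendsto (fun n => uA (p (ψ n)).1 (u (ψ n)) - (p (ψ n)).2) atTop
          (nhds (uA pb.1 r - pb.2)) := by
        have : Tendsto (fun n => ((p (ψ n)).1, u (ψ n))) atTop (nhds (pb.1, r)) :=
          h1.prodMk_nhds huψ
        exact ((cA.tendsto _).comp this).sub h2
      exact le_of_tendsto_of_tendsto' hL hRt (fun n => (hpB (ψ n)).2 q hq)
    have hpba : pb.1 ≤ a' := le_of_tendsto h1 (Eventually.of_forall fun n => hpa (ψ n))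
    have hpbA : pb.1 ∈ Icc a0 abar := (hMsub hpbM).1
    have hyR : y ∈ Icc rlo rhi := by
      refine isClosed_Icc.mem_of_tendsto hvlim (Eventually.of_forall fun n => ?_)
      rw [hpv n]
      exact (hrBR (p n).1 (hMsub (hpB n).1).1).1
    have hymax : ∀ r' ∈ Icc rlo rhi, uO pb.1 r' ≤ uO pb.1 y := by
      intro r' hr'
      have hL : Tendsto (fun n => uO (p (ψ n)).1 r') atTop (nhds (uO pb.1 r')) :=
        (cO.tendsto _).comp (h1.prodMk_nhds tendsto_const_nhds)
      have hRt : Tendsto (fun n => uO (p (ψ n)).1 (v (ψ n))) atTop (nhds (uO pb.1 y)) :=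
        (cO.tendsto _).comp (h1.prodMk_nhds hvψ)
      refine le_of_tendsto_of_tendsto' hL hRt (fun n => ?_)
      rw [hpv (ψ n)]
      by_cases he : r' = rBR (p (ψ n)).1
      · rw [he]
      · exact ((hrBR (p (ψ n)).1 (hMsub (hpB (ψ n)).1).1).2 r' hr' he).le
    have hyeq : y = rBR pb.1 := by
      by_contra hne
      have h1' := (hrBR pb.1 hpbA).2 y hyR hne
      have h2' := hymax (rBR pb.1) (hrBR pb.1 hpbA).1
      linarith
    exact ⟨pb, hpbB, hpba, hyeq⟩
  -- KEY STEP: find r* with two best replies bracketing it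
  obtain ⟨rs, hrsR, p1, hp1B, p2, hp2B, ha1, ha2, hle1, hle2⟩ :
      ∃ rs ∈ Icc rlo rhi, ∃ p1, p1 ∈ B rs ∧ ∃ p2, p2 ∈ B rs ∧
        p1.1 ≤ a' ∧ p2.1 ≤ a' ∧ rBR p1.1 ≤ rs ∧ rs ≤ rBR p2.1 := by
    rcases lt_trichotomy (rBR a') ρstar with hcase | hcase | hcase
    · -- case r(a') < ρ*
      set C : Set ℝ := Icc (rBR a') ρstar ∩ {r | d1 a0 ρstar ≤ d1 a0 r} with hC
      have hCclosed : IsClosed C := isClosed_Icc.inter (isClosed_le continuous_const hφcont)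
      have hCne : C.Nonempty := ⟨ρstar, ⟨hcase.le, le_refl _⟩, by simp⟩
      have hCbdd : BddBelow C := ⟨rBR a', fun r hr => hr.1.1⟩
      set σ := sInf C with hσdef
      have hσC : σ ∈ C := hCclosed.csInf_mem hCne hCbdd
      have hσIcc : σ ∈ Icc (rBR a') ρstar := hσC.1
      have hσφ : d1 a0 ρstar ≤ d1 a0 σ := hσC.2
      have hσR : σ ∈ Icc rlo rhi := ⟨hrbR.1.trans hσIcc.1, hσIcc.2.trans hρR.2⟩
      have hrbσ : rBR a' < σ := by
        refine lt_of_le_of_ne hσIcc.1 (fun h => absurd hσφ (not_le.2 ?_))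
        rw [← h]; exact hφrb
      have hnotC : ∀ r, rBR a' ≤ r → r < σ → d1 a0 r < d1 a0 ρstar := by
        intro r h1 h2
        by_contra h
        push_neg at h
        have hmem : r ∈ C := ⟨⟨h1, h2.le.trans hσIcc.2⟩, h⟩
        exact absurd (csInf_le hCbdd hmem) (not_le.2 h2)
      have hφσ : d1 a0 σ = d1 a0 ρstar := by
        refine le_antisymm ?_ hσφ
        obtain ⟨w, hw, hwlim⟩ := seq_lt (rBR a') σ hrbσ
        exact le_of_tendsto ((hφcont.tendsto σ).comp hwlim)
          (Eventually.of_forall fun n => (hnotC (w n) (hw n).1 (hw n).2).le)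
      have hatσ : (a', t') ∈ B σ := heqB σ hσR hφσ
      have hleft : ∀ r, rlo ≤ r → r < σ → d1 a0 r < d1 a0 ρstar := by
        intro r h1 h2
        by_cases hcase2 : rBR a' ≤ r
        · exact hnotC r hcase2 h2
        push_neg at hcase2
        have hrR2 : r ∈ Icc rlo rhi := ⟨h1, h2.le.trans hσR.2⟩
        have hmin := hqc r hrR2 σ hσR (rBR a')
          ((min_le_left _ _).trans hcase2.le) (hσIcc.1.trans (le_max_right _ _))
        rcases min_cases (d1 a0 r) (d1 a0 σ) with ⟨he, _⟩ | ⟨he, _⟩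
        · rw [he] at hmin; linarith
        · rw [he] at hmin; linarith
      have hKne : ∀ r ∈ Icc rlo σ, (K r).Nonempty := by
        intro r hr
        rcases eq_or_lt_of_le hr.2 with heq | hlt'
        · exact ⟨rBR a', (a', t'), by rw [heq]; exact hatσ, le_rfl, rfl⟩
        · obtain ⟨p, hp⟩ := hBne r
          exact ⟨rBR p.1, p, hp, hmcs r ⟨hr.1, hlt'.le.trans hσR.2⟩ (hleft r hr.1 hlt') p hp, rfl⟩
      obtain ⟨s, hsIcc, y1, hy1K, y2, hy2K, hy1le, hy2ge⟩ := fixpt rlo σ rhi hσR.1 K hKne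
        (fun r _ => hKsub r)
        (fun u v r y hu hv hul hvl hrIcc => hKclosed u v r y
          (fun n => ⟨(hu n).1, (hu n).2.trans hσR.2⟩) hv hul hvl
          ⟨hrIcc.1, hrIcc.2.trans hσR.2⟩)
        ⟨rBR a', ⟨(a', t'), hatσ, le_rfl, rfl⟩, hσIcc.1⟩
      obtain ⟨q1, hq1B, hq1a, hq1y⟩ := hy1K
      obtain ⟨q2, hq2B, hq2a, hq2y⟩ := hy2K
      exact ⟨s, ⟨hsIcc.1, hsIcc.2.trans hσR.2⟩, q1, ⟨hq1B, q2, hq2B, hq1a, hq2a,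
        by rw [← hq1y]; exact hy1le, by rw [← hq2y]; exact hy2ge⟩⟩
    · rw [hcase] at hφrb
      exact absurd hφrb (lt_irrefl _)
    · -- case ρ* < r(a')
      set C : Set ℝ := Icc ρstar (rBR a') ∩ {r | d1 a0 ρstar ≤ d1 a0 r} with hC
      have hCclosed : IsClosed C := isClosed_Icc.inter (isClosed_le continuous_const hφcont)
      have hCne : C.Nonempty := ⟨ρstar, ⟨le_refl _, hcase.le⟩, by simp⟩
      have hCbdd : BddAbove C := ⟨rBR a', fun r hr => hr.1.2⟩
      set σ := sSup C with hσdef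
      have hσC : σ ∈ C := hCclosed.csSup_mem hCne hCbdd
      have hσIcc : σ ∈ Icc ρstar (rBR a') := hσC.1
      have hσφ : d1 a0 ρstar ≤ d1 a0 σ := hσC.2
      have hσR : σ ∈ Icc rlo rhi := ⟨hρR.1.trans hσIcc.1, hσIcc.2.trans hrbR.2⟩
      have hσrb : σ < rBR a' := by
        refine lt_of_le_of_ne hσIcc.2 (fun h => absurd hσφ (not_le.2 ?_))
        rw [h]; exact hφrb
      have hnotC : ∀ r, σ < r → r ≤ rBR a' → d1 a0 r < d1 a0 ρstar := by
        intro r h1 h2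
        by_contra h
        push_neg at h
        have hmem : r ∈ C := ⟨⟨hσIcc.1.trans h1.le, h2⟩, h⟩
        exact absurd (le_csSup hCbdd hmem) (not_le.2 h1)
      have hφσ : d1 a0 σ = d1 a0 ρstar := by
        refine le_antisymm ?_ hσφ
        obtain ⟨w, hw, hwlim⟩ := seq_gt σ (rBR a') hσrb
        exact le_of_tendsto ((hφcont.tendsto σ).comp hwlim)
          (Eventually.of_forall fun n => (hnotC (w n) (hw n).1 (hw n).2).le)
      have hatσ : (a', t') ∈ B σ := heqB σ hσR hφσ
      have hright : ∀ r, σ < r → r ≤ rhi → d1 a0 r < d1 a0 ρstar := by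
        intro r h1 h2
        by_cases hcase2 : r ≤ rBR a'
        · exact hnotC r h1 hcase2
        push_neg at hcase2
        have hrR2 : r ∈ Icc rlo rhi := ⟨hσR.1.trans h1.le, h2⟩
        have hmin := hqc σ hσR r hrR2 (rBR a')
          ((min_le_left _ _).trans hσrb.le) (hcase2.le.trans (le_max_right _ _))
        rcases min_cases (d1 a0 σ) (d1 a0 r) with ⟨he, _⟩ | ⟨he, _⟩
        · rw [he] at hmin; linarith
        · rw [he] at hmin; linarith
      set Km : ℝ → Set ℝ := fun r => {y | -y ∈ K (-r)} with hKm
      have hKmne : ∀ r ∈ Icc (-rhi) (-σ), (Km r).Nonempty := by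
        intro r hr
        have h1 : σ ≤ -r := by linarith [hr.2]
        have h2 : -r ≤ rhi := by linarith [hr.1]
        rcases eq_or_lt_of_le h1 with heq | hlt'
        · refine ⟨-(rBR a'), ?_⟩
          show -(-(rBR a')) ∈ K (-r)
          rw [neg_neg, ← heq]
          exact ⟨(a', t'), hatσ, le_rfl, rfl⟩
        · obtain ⟨p, hp⟩ := hBne (-r)
          refine ⟨-(rBR p.1), ?_⟩
          show -(-(rBR p.1)) ∈ K (-r)
          rw [neg_neg]
          exact ⟨p, hp, hmcs (-r) ⟨hσR.1.trans h1, h2⟩ (hright (-r) hlt' h2) p hp, rfl⟩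
      have hKmsub : ∀ r ∈ Icc (-rhi) (-σ), Km r ⊆ Icc (-rhi) (-rlo) := by
        intro r _ y hy
        have h := hKsub (-r) hy
        exact ⟨by linarith [h.2], by linarith [h.1]⟩
      have hKmclosed : ∀ (u v : ℕ → ℝ) (r y : ℝ), (∀ n, u n ∈ Icc (-rhi) (-σ)) →
          (∀ n, v n ∈ Km (u n)) → Tendsto u atTop (nhds r) → Tendsto v atTop (nhds y) →
          r ∈ Icc (-rhi) (-σ) → y ∈ Km r := by
        intro u v r y hu hv hul hvl hrIcc
        show -y ∈ K (-r)
        exact hKclosed (fun n => -(u n)) (fun n => -(v n)) (-r) (-y)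
          (fun n => ⟨show rlo ≤ -(u n) by linarith [(hu n).2, hσR.1],
            show -(u n) ≤ rhi by linarith [(hu n).1]⟩)
          (fun n => hv n) hul.neg hvl.neg
          ⟨by linarith [hrIcc.2, hσR.1], by linarith [hrIcc.1]⟩
      have htopm : -(rBR a') ∈ Km (-σ) := by
        show -(-(rBR a')) ∈ K (-(-σ))
        rw [neg_neg, neg_neg]
        exact ⟨(a', t'), hatσ, le_rfl, rfl⟩
      obtain ⟨s, hsIcc, y1, hy1K, y2, hy2K, hy1le, hy2ge⟩ := fixpt (-rhi) (-σ) (-rlo)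
        (by linarith [hσR.2]) Km hKmne hKmsub hKmclosed
        ⟨-(rBR a'), htopm, by linarith [hσrb]⟩
      obtain ⟨q2, hq2B, hq2a, hq2y⟩ := hy1K
      obtain ⟨q1, hq1B, hq1a, hq1y⟩ := hy2K
      exact ⟨-s, ⟨by linarith [hsIcc.2, hσR.1], by linarith [hsIcc.1]⟩, q1, ⟨hq1B, q2, hq2B,
        hq1a, hq2a, by rw [← hq1y]; linarith, by rw [← hq2y]; linarith⟩⟩
  -- endgame: construct the equilibrium from the bracketing best replies
  have hDO : ∀ a r : ℝ, HasDerivAt (fun y => uO a y)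
      (fderiv ℝ (fun p : ℝ × ℝ => uO p.1 p.2) (a, r) (0, 1)) r := fun a r => pderiv2 huO a r
  set DO : ℝ → ℝ → ℝ := fun a r => fderiv ℝ (fun p : ℝ × ℝ => uO p.1 p.2) (a, r) (0, 1)
    with hDOdef
  have hmeas : ∀ r : ℝ, Measurable fun p : ℝ × ℝ => uO p.1 r := fun r =>
    (cO.comp (continuous_fst.prodMk continuous_const)).measurable
  have ha1A : p1.1 ∈ Icc a0 abar := (hMsub hp1B.1).1
  have ha2A : p2.1 ∈ Icc a0 abar := (hMsub hp2B.1).1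
  have hbr1R : rBR p1.1 ∈ Icc rlo rhi := (hrBR p1.1 ha1A).1
  have hbr2R : rBR p2.1 ∈ Icc rlo rhi := (hrBR p2.1 ha2A).1
  have hmaxle : ∀ b ∈ Icc a0 abar, ∀ x ∈ Icc rlo rhi, uO b x ≤ uO b (rBR b) := by
    intro b hb x hx
    by_cases h : x = rBR b
    · rw [h]
    · exact ((hrBR b hb).2 x hx h).le
  by_cases hc1 : rBR p1.1 = rs
  · refine build uA uO rlo rhi hmeas M a' rs hrsR p1 p1 hp1B.1 hp1B.1 hp1B.2 hp1B.2 ha1 ha1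
      0 le_rfl zero_le_one ?_
    intro r' hr'
    have h := hmaxle p1.1 ha1A r' hr'
    rw [hc1] at h
    norm_num
    linarith
  by_cases hc2 : rBR p2.1 = rs
  · refine build uA uO rlo rhi hmeas M a' rs hrsR p2 p2 hp2B.1 hp2B.1 hp2B.2 hp2B.2 ha2 ha2
      0 le_rfl zero_le_one ?_
    intro r' hr'
    have h := hmaxle p2.1 ha2A r' hr'
    rw [hc2] at h
    norm_num
    linarith
  -- genuinely mixed case
  have hlt1 : rBR p1.1 < rs := lt_of_le_of_ne hle1 hc1
  have hlt2 : rs < rBR p2.1 := lt_of_le_of_ne hle2 fun h => hc2 h.symm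
  have hgi : ∀ b ∈ Icc a0 abar, ∀ x ∈ Icc rlo rhi, ∀ y ∈ Icc rlo rhi,
      uO b y ≤ uO b x + DO b x * (y - x) := fun b hb x hx y hy =>
    grad_ineq (hconc b hb).concaveOn (fun z _ => hDO b z) hx hy
  have hD1 : DO p1.1 rs < 0 := by
    have hgrad := hgi p1.1 ha1A rs hrsR (rBR p1.1) hbr1R
    have hle := hmaxle p1.1 ha1A rs hrsR
    have hprod : 0 ≤ DO p1.1 rs * (rBR p1.1 - rs) := by linarith
    have hD1le : DO p1.1 rs ≤ 0 := le_of_not_gt fun h =>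
      absurd hprod (not_le.2 (mul_neg_of_pos_of_neg h (by linarith)))
    rcases lt_or_eq_of_le hD1le with h | h
    · exact h
    · exfalso
      have hlt' := (hrBR p1.1 ha1A).2 rs hrsR (fun h' => hc1 h'.symm)
      rw [h, zero_mul, add_zero] at hgrad
      linarith
  have hD2 : 0 < DO p2.1 rs := by
    have hgrad := hgi p2.1 ha2A rs hrsR (rBR p2.1) hbr2R
    have hle := hmaxle p2.1 ha2A rs hrsR
    have hprod : 0 ≤ DO p2.1 rs * (rBR p2.1 - rs) := by linarith
    have hD2ge : 0 ≤ DO p2.1 rs := le_of_not_gt fun h =>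
      absurd hprod (not_le.2 (mul_neg_of_neg_of_pos h (by linarith)))
    rcases lt_or_eq_of_le hD2ge with h | h
    · exact h
    · exfalso
      have hlt' := (hrBR p2.1 ha2A).2 rs hrsR (fun h' => hc2 h'.symm)
      rw [← h, zero_mul, add_zero] at hgrad
      linarith
  have hden : 0 < DO p2.1 rs - DO p1.1 rs := by linarith
  set lam : ℝ := -DO p1.1 rs / (DO p2.1 rs - DO p1.1 rs) with hlam
  have h0lam : 0 ≤ lam := div_nonneg (by linarith) hden.le
  have h1lam : lam ≤ 1 := (div_le_one hden).2 (by linarith)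
  have hzero : lam * DO p2.1 rs + (1 - lam) * DO p1.1 rs = 0 := by
    rw [hlam]
    field_simp
    ring
  have hcc : ConcaveOn ℝ (Icc rlo rhi) (fun r => lam * uO p2.1 r + (1 - lam) * uO p1.1 r) := by
    have h2 := (hconc p2.1 ha2A).concaveOn.smul h0lam
    have h1' := (hconc p1.1 ha1A).concaveOn.smul (by linarith : (0:ℝ) ≤ 1 - lam)
    have h3 := h2.add h1'
    simpa [Pi.smul_apply, smul_eq_mul, Pi.add_def] using h3
  have hder : ∀ x ∈ Icc rlo rhi, HasDerivAt (fun r => lam * uO p2.1 r + (1 - lam) * uO p1.1 r)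
      (lam * DO p2.1 x + (1 - lam) * DO p1.1 x) x := fun x _ =>
    ((hDO p2.1 x).const_mul lam).add ((hDO p1.1 x).const_mul (1 - lam))
  refine build uA uO rlo rhi hmeas M a' rs hrsR p1 p2 hp1B.1 hp2B.1 hp1B.2 hp2B.2 ha1 ha2
    lam h0lam h1lam ?_
  intro r' hr'
  have h : lam * uO p2.1 r' + (1 - lam) * uO p1.1 r' ≤
      (lam * uO p2.1 rs + (1 - lam) * uO p1.1 rs) +
        (lam * DO p2.1 rs + (1 - lam) * DO p1.1 rs) * (r' - rs) :=
    grad_ineq hcc hder hrsR hr'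
  rw [hzero, zero_mul, add_zero] at h
  exact h
end

section
/- Let a* ∈ A with a* > a₀. Under Assumption 1 (ranked incentives), ∫_{a₀}^{a*} min( max_{a'' ∈ [a₀,a']} ∂₁u_A(a', r(a'')), ∂₁u_A(a', r(a*)) ) da' = ∫_{a₀}^{a*} ∂₁u_A(a', r(a*)) da' if and only if r(a₀) ≽_AI r(a*); that is, the robust value of inducing a* coincides with the partial-implementation value (so the partial-implementation solution is robustly optimal) exactly when r(a*) is dominated by r(a₀) in the order of agent incentives. -/
open MeasureTheory Set

lemma d1_cont (uA : ℝ → ℝ → ℝ) (huA : ContDiff ℝ 2 fun p : ℝ × ℝ => uA p.1 p.2)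
    (d1 : ℝ → ℝ → ℝ) (hd1 : ∀ a r : ℝ, HasDerivAt (fun x => uA x r) (d1 a r) a) :
    Continuous fun p : ℝ × ℝ => d1 p.1 p.2 := by
  have h1 : (1 : WithTop ℕ∞) ≤ 2 := by norm_num
  have hF : Continuous (fderiv ℝ fun p : ℝ × ℝ => uA p.1 p.2) := huA.continuous_fderiv (by norm_num)
  have key : ∀ p : ℝ × ℝ, d1 p.1 p.2
      = fderiv ℝ (fun p : ℝ × ℝ => uA p.1 p.2) p (1, 0) := by
    rintro ⟨a, r⟩
    have hdiff : HasFDerivAt (fun p : ℝ × ℝ => uA p.1 p.2)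
        (fderiv ℝ (fun p : ℝ × ℝ => uA p.1 p.2) (a, r)) (a, r) :=
      ((huA.differentiable (by norm_num)) (a, r)).hasFDerivAt
    have hline : HasDerivAt (fun x : ℝ => ((x, r) : ℝ × ℝ)) ((1 : ℝ), (0 : ℝ)) a :=
      (hasDerivAt_id a).prodMk (hasDerivAt_const a r)
    exact (hd1 a r).unique (by have := hdiff.comp_hasDerivAt a hline; exact this)
  have hc : Continuous fun p : ℝ × ℝ =>
      fderiv ℝ (fun p : ℝ × ℝ => uA p.1 p.2) p ((1 : ℝ), (0 : ℝ)) :=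
    hF.clm_apply continuous_const
  exact hc.congr fun p => (key p).symm

lemma rBR_contOn (a0 abar rlo rhi : ℝ) (uO : ℝ → ℝ → ℝ)
    (huO : Continuous fun p : ℝ × ℝ => uO p.1 p.2)
    (rBR : ℝ → ℝ)
    (hrBR : ∀ a ∈ Set.Icc a0 abar, rBR a ∈ Set.Icc rlo rhi ∧
      ∀ r' ∈ Set.Icc rlo rhi, r' ≠ rBR a → uO a r' < uO a (rBR a)) :
    ContinuousOn rBR (Set.Icc a0 abar) := by
  have hcomp : IsCompact (Set.Icc a0 abar ×ˢ Set.Icc rlo rhi) :=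
    isCompact_Icc.prod isCompact_Icc
  have huc := hcomp.uniformContinuousOn_of_continuous huO.continuousOn
  rw [Metric.uniformContinuousOn_iff] at huc
  intro a1 ha1
  rw [Metric.continuousWithinAt_iff]
  intro ε hε
  set K := Set.Icc rlo rhi ∩ {r | ε ≤ dist r (rBR a1)} with hKdef
  by_cases hKne : K.Nonempty
  · have hKcomp : IsCompact K :=
      isCompact_Icc.inter_right (isClosed_le continuous_const (continuous_id.dist continuous_const))
    have hcont1 : ContinuousOn (fun r => uO a1 r) K :=
      (huO.comp (continuous_const.prodMk continuous_id)).continuousOn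
    obtain ⟨rK, hrK, hrKmax⟩ := hKcomp.exists_isMaxOn hKne hcont1
    have hrKne : rK ≠ rBR a1 := by
      intro h
      have h2 := hrK.2
      rw [Set.mem_setOf_eq, h, dist_self] at h2
      linarith
    have hη : 0 < uO a1 (rBR a1) - uO a1 rK :=
      sub_pos.2 ((hrBR a1 ha1).2 rK hrK.1 hrKne)
    set η := uO a1 (rBR a1) - uO a1 rK with hηdef
    obtain ⟨δ, hδ, hδ'⟩ := huc (η / 2) (by linarith)
    refine ⟨δ, hδ, fun a ha hdista => ?_⟩
    by_contra hcon
    push_neg at hcon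
    have hmem : rBR a ∈ K := ⟨(hrBR a ha).1, hcon⟩
    have hd1' : dist ((a, rBR a) : ℝ × ℝ) ((a1, rBR a) : ℝ × ℝ) < δ := by
      rw [Prod.dist_eq, dist_self]
      rwa [max_eq_left dist_nonneg]
    have hd2' : dist ((a, rBR a1) : ℝ × ℝ) ((a1, rBR a1) : ℝ × ℝ) < δ := by
      rw [Prod.dist_eq, dist_self]
      rwa [max_eq_left dist_nonneg]
    have h1 := hδ' (a, rBR a) ⟨ha, (hrBR a ha).1⟩ (a1, rBR a) ⟨ha1, (hrBR a ha).1⟩ hd1'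
    have h2 := hδ' (a, rBR a1) ⟨ha, (hrBR a1 ha1).1⟩ (a1, rBR a1) ⟨ha1, (hrBR a1 ha1).1⟩ hd2'
    rw [Real.dist_eq] at h1 h2
    have e1 : uO a (rBR a) - uO a1 (rBR a) < η / 2 := (le_abs_self _).trans_lt h1
    have e2 : uO a1 (rBR a1) - uO a (rBR a1) < η / 2 := by
      rw [abs_sub_comm] at h2
      exact (le_abs_self _).trans_lt h2
    have hmax : uO a1 (rBR a) ≤ uO a1 rK := hrKmax hmem
    have hne2 : rBR a1 ≠ rBR a := by
      intro h
      have h2' := hmem.2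
      rw [Set.mem_setOf_eq, ← h, dist_self] at h2'
      linarith
    have hmaxa : uO a (rBR a1) < uO a (rBR a) :=
      (hrBR a ha).2 (rBR a1) (hrBR a1 ha1).1 hne2
    linarith
  · refine ⟨1, one_pos, fun a ha _ => ?_⟩
    by_contra hcon
    push_neg at hcon
    exact hKne ⟨rBR a, (hrBR a ha).1, hcon⟩

lemma sup_fun_continuousOn (a0 b : ℝ) (H : ℝ → ℝ → ℝ)
    (hH : ContinuousOn (fun p : ℝ × ℝ => H p.1 p.2) (Set.Icc a0 b ×ˢ Set.Icc a0 b)) :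
    ContinuousOn (fun x => sSup (H x '' Set.Icc a0 x)) (Set.Icc a0 b) := by
  have hcompsq : IsCompact (Set.Icc a0 b ×ˢ Set.Icc a0 b) := isCompact_Icc.prod isCompact_Icc
  have huc := hcompsq.uniformContinuousOn_of_continuous hH
  rw [Metric.uniformContinuousOn_iff] at huc
  have hbdd : ∀ y ∈ Set.Icc a0 b, BddAbove (H y '' Set.Icc a0 y) := by
    intro y hy
    have hcy : ContinuousOn (H y) (Set.Icc a0 y) := by
      have : ContinuousOn (fun t : ℝ => (fun p : ℝ × ℝ => H p.1 p.2) (y, t)) (Set.Icc a0 y) := by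
        apply hH.comp ((continuous_const.prodMk continuous_id).continuousOn)
        intro t ht
        exact ⟨hy, ht.1, ht.2.trans hy.2⟩
      exact this
    exact (isCompact_Icc.image_of_continuousOn hcy).bddAbove
  have hne : ∀ y ∈ Set.Icc a0 b, (H y '' Set.Icc a0 y).Nonempty := fun y hy =>
    (Set.nonempty_Icc.2 hy.1).image _
  have key : ∀ ε > (0:ℝ), ∃ δ > (0:ℝ), ∀ x ∈ Set.Icc a0 b, ∀ y ∈ Set.Icc a0 b,
      dist x y < δ → sSup (H x '' Set.Icc a0 x) ≤ sSup (H y '' Set.Icc a0 y) + ε := by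
    intro ε hε
    obtain ⟨δ, hδ, hδ'⟩ := huc ε hε
    refine ⟨δ, hδ, fun x hx y hy hxy => ?_⟩
    refine csSup_le (hne x hx) ?_
    rintro v ⟨t, ht, rfl⟩
    set t' := min t y with ht'def
    have ht'mem : t' ∈ Set.Icc a0 y := ⟨le_min ht.1 hy.1, min_le_right _ _⟩
    have htb : t ∈ Set.Icc a0 b := ⟨ht.1, ht.2.trans hx.2⟩
    have ht'b : t' ∈ Set.Icc a0 b := ⟨ht'mem.1, ht'mem.2.trans hy.2⟩
    have hdist : dist ((x, t) : ℝ × ℝ) ((y, t') : ℝ × ℝ) < δ := by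
      rw [Prod.dist_eq]
      refine max_lt hxy ?_
      rw [Real.dist_eq] at hxy ⊢
      rcases le_or_gt t y with h | h
      · rw [ht'def, min_eq_left h, sub_self, abs_zero]; exact hδ
      · rw [ht'def, min_eq_right h.le]
        have h1 : t - y ≤ x - y := by linarith [ht.2]
        have h2 : x - y ≤ |x - y| := le_abs_self _
        rw [abs_of_nonneg (by linarith)]
        linarith
    have hval := hδ' (x, t) ⟨hx, htb⟩ (y, t') ⟨hy, ht'b⟩ hdist
    rw [Real.dist_eq] at hval
    have hle : H y t' ≤ sSup (H y '' Set.Icc a0 y) := le_csSup (hbdd y hy) ⟨t', ht'mem, rfl⟩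
    have : H x t - H y t' < ε := (le_abs_self _).trans_lt hval
    linarith
  intro x1 hx1
  rw [Metric.continuousWithinAt_iff]
  intro ε hε
  obtain ⟨δ, hδ, hkey⟩ := key (ε / 2) (by linarith)
  refine ⟨δ, hδ, fun x hx hxd => ?_⟩
  have h1 := hkey x hx x1 hx1 hxd
  have h2 := hkey x1 hx1 x hx (by rwa [dist_comm])
  rw [Real.dist_eq, abs_sub_lt_iff]
  constructor <;> linarith

/-- Corollary: under ranked incentives, the robust value of inducing `a*`
coincides with the partial-implementation value iff `r(a₀) ≽_AI r(a*)`. -/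
theorem stmt18 (a0 abar rlo rhi : ℝ) (hA : a0 < abar) (hR : rlo < rhi)
    (uA uO : ℝ → ℝ → ℝ)
    (huA : ContDiff ℝ 2 fun p : ℝ × ℝ => uA p.1 p.2)
    (huO : ContDiff ℝ 2 fun p : ℝ × ℝ => uO p.1 p.2)
    (hconc : ∀ a ∈ Set.Icc a0 abar, StrictConcaveOn ℝ (Set.Icc rlo rhi) (fun r => uO a r))
    (d1 : ℝ → ℝ → ℝ)
    (hd1 : ∀ a r : ℝ, HasDerivAt (fun x => uA x r) (d1 a r) a)
    (hRI : RankedIncentives d1 (Set.Icc a0 abar) (Set.Icc rlo rhi))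
    (rBR : ℝ → ℝ)
    (hrBR : ∀ a ∈ Set.Icc a0 abar, rBR a ∈ Set.Icc rlo rhi ∧
      ∀ r' ∈ Set.Icc rlo rhi, r' ≠ rBR a → uO a r' < uO a (rBR a))
    (astar : ℝ) (hastar : astar ∈ Set.Icc a0 abar) (hgt : a0 < astar) :
    (∫ a' in a0..astar,
        min (sSup ((fun a'' => d1 a' (rBR a'')) '' Set.Icc a0 a')) (d1 a' (rBR astar))) =
      (∫ a' in a0..astar, d1 a' (rBR astar)) ↔
    succeqAI d1 (Set.Icc a0 abar) (rBR a0) (rBR astar) := by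
  have hsub : Set.Icc a0 astar ⊆ Set.Icc a0 abar := Set.Icc_subset_Icc_right hastar.2
  have hd1c := d1_cont uA huA d1 hd1
  have hrc := rBR_contOn a0 abar rlo rhi uO huO.continuous rBR hrBR
  set S : ℝ → ℝ := fun x => sSup ((fun a'' => d1 x (rBR a'')) '' Set.Icc a0 x) with hSdef
  set g : ℝ → ℝ := fun a' => d1 a' (rBR astar) with hgdef
  set f : ℝ → ℝ := fun x => min (S x) (g x) with hfdef
  have hHc : ContinuousOn (fun p : ℝ × ℝ => d1 p.1 (rBR p.2))
      (Set.Icc a0 astar ×ˢ Set.Icc a0 astar) := by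
    have hmap : ContinuousOn (fun p : ℝ × ℝ => ((p.1, rBR p.2) : ℝ × ℝ))
        (Set.Icc a0 astar ×ˢ Set.Icc a0 astar) :=
      (continuous_fst.continuousOn).prodMk
        (hrc.comp continuous_snd.continuousOn (fun p hp => hsub hp.2))
    exact hd1c.comp_continuousOn hmap
  have hScont : ContinuousOn S (Set.Icc a0 astar) :=
    sup_fun_continuousOn a0 astar (fun x t => d1 x (rBR t)) hHc
  have hgc : Continuous g := hd1c.comp (continuous_id.prodMk continuous_const)
  have hfc : ContinuousOn f (Set.Icc a0 astar) := hScont.inf hgc.continuousOn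
  have huIcc : Set.uIcc a0 astar = Set.Icc a0 astar := Set.uIcc_of_le hastar.1
  have hbdd : ∀ x ∈ Set.Icc a0 astar, BddAbove ((fun a'' => d1 x (rBR a'')) '' Set.Icc a0 x) := by
    intro x hx
    have hcx : ContinuousOn (fun t => d1 x (rBR t)) (Set.Icc a0 x) := by
      have hmap : ContinuousOn (fun t : ℝ => ((x, rBR t) : ℝ × ℝ)) (Set.Icc a0 x) :=
        continuousOn_const.prodMk
          (hrc.mono (Set.Icc_subset_Icc_right (hx.2.trans hastar.2)))
      exact hd1c.comp_continuousOn hmap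
    exact (isCompact_Icc.image_of_continuousOn hcx).bddAbove
  have ha0A : a0 ∈ Set.Icc a0 abar := ⟨le_refl a0, hA.le⟩
  have hgoal : (∫ a' in a0..astar, f a') = (∫ a' in a0..astar, g a') ↔
      succeqAI d1 (Set.Icc a0 abar) (rBR a0) (rBR astar) := by
    constructor
    · intro heq
      by_contra hnd
      rcases hRI.1 (rBR a0) (hrBR a0 ha0A).1 (rBR astar) (hrBR astar hastar).1 with h | h
      · exact hnd h
      have hlt : ∀ a ∈ Set.Icc a0 abar, d1 a (rBR a0) < d1 a (rBR astar) :=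
        hRI.2 (rBR astar) (hrBR astar hastar).1 (rBR a0) (hrBR a0 ha0A).1 ⟨h, hnd⟩
      set c := d1 a0 (rBR astar) - d1 a0 (rBR a0) with hcdef
      have hcpos : 0 < c := sub_pos.2 (hlt a0 ha0A)
      have hS0 : S a0 = d1 a0 (rBR a0) := by
        rw [hSdef]
        simp [Set.Icc_self]
      have hx0 : a0 ∈ Set.Icc a0 astar := ⟨le_refl _, hastar.1⟩
      have hcw : ContinuousWithinAt (fun x => g x - S x) (Set.Icc a0 astar) a0 :=
        (hgc.continuousOn a0 hx0).sub (hScont a0 hx0)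
      rw [Metric.continuousWithinAt_iff] at hcw
      obtain ⟨δ, hδ, hgap⟩ := hcw (c / 2) (by linarith)
      set m := min (a0 + δ / 2) astar with hmdef
      have hm1 : a0 < m := lt_min (by linarith) hgt
      have hm2 : m ≤ astar := min_le_right _ _
      have hgapm : ∀ x ∈ Set.Icc a0 m, f x ≤ g x - c / 2 := by
        intro x hx
        have hxs : x ∈ Set.Icc a0 astar := ⟨hx.1, hx.2.trans hm2⟩
        have hdx : dist x a0 < δ := by
          rw [Real.dist_eq, abs_of_nonneg (by linarith [hx.1])]
          have hxm : x ≤ a0 + δ / 2 := hx.2.trans (min_le_left _ _)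
          linarith
        have hgx := hgap hxs hdx
        rw [Real.dist_eq] at hgx
        have h0 : g a0 - S a0 = c := by rw [hS0]
        have hlow : -(c/2) < (g x - S x) - (g a0 - S a0) := neg_lt_of_abs_lt hgx
        have hfle : f x ≤ S x := min_le_left _ _
        rw [h0] at hlow
        linarith
      have hfint : IntervalIntegrable f volume a0 astar := by
        apply ContinuousOn.intervalIntegrable
        rwa [huIcc]
      have hgint : IntervalIntegrable g volume a0 astar := hgc.intervalIntegrable _ _
      have hfint1 : IntervalIntegrable f volume a0 m :=
        hfint.mono_set (by rw [huIcc, Set.uIcc_of_le hm1.le]; exact Set.Icc_subset_Icc_right hm2)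
      have hfint2 : IntervalIntegrable f volume m astar :=
        hfint.mono_set (by rw [huIcc, Set.uIcc_of_le hm2]; exact Set.Icc_subset_Icc_left hm1.le)
      have hgint1 : IntervalIntegrable g volume a0 m := hgc.intervalIntegrable _ _
      have hgint2 : IntervalIntegrable g volume m astar := hgc.intervalIntegrable _ _
      have hb1 : (∫ a' in a0..m, f a') ≤ ∫ a' in a0..m, (g a' - c / 2) := by
        apply intervalIntegral.integral_mono_on hm1.le hfint1 _ hgapm
        exact (hgc.sub continuous_const).intervalIntegrable _ _
      have hb1' : (∫ a' in a0..m, (g a' - c / 2)) = (∫ a' in a0..m, g a') - (m - a0) * (c / 2) := by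
        rw [intervalIntegral.integral_sub hgint1 intervalIntegrable_const,
          intervalIntegral.integral_const, smul_eq_mul]
      have hb2 : (∫ a' in m..astar, f a') ≤ ∫ a' in m..astar, g a' :=
        intervalIntegral.integral_mono_on hm2 hfint2 hgint2 (fun x _ => min_le_right _ _)
      have hsplitf := intervalIntegral.integral_add_adjacent_intervals hfint1 hfint2
      have hsplitg := intervalIntegral.integral_add_adjacent_intervals hgint1 hgint2
      have hpos : 0 < (m - a0) * (c / 2) := by
        apply mul_pos (by linarith) (by linarith)
      linarith [heq]
    · intro hdom
      apply intervalIntegral.integral_congr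
      intro a' ha'
      rw [huIcc] at ha'
      have ha'A : a' ∈ Set.Icc a0 abar := hsub ha'
      have hle : g a' ≤ S a' := by
        have h1 : g a' ≤ d1 a' (rBR a0) := hdom a' ha'A
        have h2 : d1 a' (rBR a0) ≤ S a' :=
          le_csSup (hbdd a' ha') ⟨a0, ⟨le_refl _, ha'.1⟩, rfl⟩
        linarith
      exact min_eq_right hle
  exact hgoal
end
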